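/- For any transposition applied to a permutation, the number of cycles in the breakpoint graph changes by at most 2, i.e., Δc(τ) ≤ 2. -/

import Mathlib

/-- The alternating cycles of the breakpoint graph of a black perfect matching `b`
and a gray perfect matching `g` (both fixed-point-free involutions). -/
def altCycleSetoid {V : Type*} (b g : Equiv.Perm V) : Setoid V :=
  Relation.EqvGen.setoid (fun v w => b v = w ∨ g v = w)

/-- The number of alternating cycles of the breakpoint graph. -/
noncomputable def numAltCycles {V : Type*} (b g : Equiv.Perm V) : ℕ :=
  Nat.card (Quotient (altCycleSetoid b g))

/-- Counting lemma: if all collisions of `f` happen inside `B`, then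
`card α ≤ card β + (B.card - 1)`. -/
lemma aux_count {α β : Type*} [Fintype α] [Fintype β] [DecidableEq α] [DecidableEq β]
    (f : α → β) (B : Finset α) (hB : B.Nonempty)
    (hkey : ∀ x y, f x = f y → x ≠ y → x ∈ B) :
    Fintype.card α + 1 ≤ Fintype.card β + B.card := by
  classical
  set Bc : Finset α := Finset.univ \ B with hBc
  have hinj : Set.InjOn f Bc := by
    intro x hx y hy hxy
    by_contra hne
    have := hkey x y hxy hne
    simp [hBc] at hx
    exact hx this
  have hdisj : Disjoint (Bc.image f) (B.image f) := by
    rw [Finset.disjoint_left]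
    rintro z hz1 hz2
    obtain ⟨x, hx, rfl⟩ := Finset.mem_image.mp hz1
    obtain ⟨y, hy, hfy⟩ := Finset.mem_image.mp hz2
    by_cases hne : x = y
    · subst hne
      simp [hBc] at hx
      exact hx hy
    · have := hkey x y hfy.symm hne
      simp [hBc] at hx
      exact hx this
  have h1 : Bc.card + 1 ≤ Fintype.card β := by
    have hcard : (Bc.image f).card = Bc.card := Finset.card_image_of_injOn hinj
    have hne : (B.image f).Nonempty := hB.image f
    have hunion : (Bc.image f ∪ B.image f).card = (Bc.image f).card + (B.image f).card :=
      Finset.card_union_of_disjoint hdisj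
    have hle : (Bc.image f ∪ B.image f).card ≤ Fintype.card β := by
      simpa using Finset.card_le_univ (Bc.image f ∪ B.image f)
    have : 1 ≤ (B.image f).card := Finset.card_pos.mpr hne
    omega
  have h2 : Bc.card + B.card = Fintype.card α := by
    have : Bc.card = Fintype.card α - B.card := by
      simp [hBc, Finset.card_sdiff_of_subset (Finset.subset_univ B)]
    have hle : B.card ≤ Fintype.card α := by
      simpa using Finset.card_le_univ B
    omega
  omega

/-- For any transposition applied to a permutation, the number of cycles of the
breakpoint graph changes by at most 2: a transposition replaces exactly three black edges
(on a set `D` of six endpoints) by three new black edges on the same endpoints,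
leaving the gray matching `g` untouched, and then
`Δc = numAltCycles b' g - numAltCycles b g ≤ 2`. -/
theorem stmt3 {V : Type*} [Fintype V] [DecidableEq V]
    (b b' g : Equiv.Perm V)
    (hb1 : ∀ v, b v ≠ v) (hb2 : ∀ v, b (b v) = v)
    (hb'1 : ∀ v, b' v ≠ v) (hb'2 : ∀ v, b' (b' v) = v)
    (hg1 : ∀ v, g v ≠ v) (hg2 : ∀ v, g (g v) = v)
    (D : Finset V) (hD : D.card = 6)
    (hbD : ∀ v ∈ D, b v ∈ D) (hb'D : ∀ v ∈ D, b' v ∈ D)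
    (hsame : ∀ v ∉ D, b' v = b v) :
    numAltCycles b' g ≤ numAltCycles b g + 2 := by
  classical
  -- the intermediate setoid generated by all of b, b', g edges
  set r1 : V → V → Prop := fun v w => b v = w ∨ b' v = w ∨ g v = w with hr1
  set S1 : Setoid V := Relation.EqvGen.setoid r1 with hS1
  set s : Setoid V := altCycleSetoid b' g with hs
  set t : Setoid V := altCycleSetoid b g with ht
  haveI : Fintype (Quotient s) := Fintype.ofFinite _
  haveI : Fintype (Quotient t) := Fintype.ofFinite _
  haveI : Fintype (Quotient S1) := Fintype.ofFinite _
  have hs_r : ∀ v w : V, s v w ↔ Relation.EqvGen (fun v w => b' v = w ∨ g v = w) v w := by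
    intro v w; rfl
  have ht_r : ∀ v w : V, t v w ↔ Relation.EqvGen (fun v w => b v = w ∨ g v = w) v w := by
    intro v w; rfl
  have hS1_r : ∀ v w : V, S1 v w ↔ Relation.EqvGen r1 v w := by
    intro v w; rfl
  -- t ≤ S1 and s ≤ S1
  have hts : ∀ v w : V, t v w → S1 v w := by
    intro v w h
    rw [ht_r] at h; rw [hS1_r]
    exact Relation.EqvGen.mono (r := fun v w => b v = w ∨ g v = w) (p := r1)
      (fun a c hac => hac.elim Or.inl (fun h => Or.inr (Or.inr h))) v w h
  have hss : ∀ v w : V, s v w → S1 v w := by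
    intro v w h
    rw [hs_r] at h; rw [hS1_r]
    exact Relation.EqvGen.mono (r := fun v w => b' v = w ∨ g v = w) (p := r1)
      (fun a c hac => hac.elim (fun h => Or.inr (Or.inl h))
      (fun h => Or.inr (Or.inr h))) v w h
  -- Step 1: card (Quotient S1) ≤ card (Quotient t)
  have step1 : Fintype.card (Quotient S1) ≤ Fintype.card (Quotient t) := by
    apply Fintype.card_le_of_surjective (Quotient.map' id hts)
    intro z
    obtain ⟨v, rfl⟩ := Quotient.exists_rep z
    exact ⟨Quotient.mk t v, rfl⟩
  -- Key structural lemma about S1 versus s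
  have key : ∀ v w : V, Relation.EqvGen r1 v w →
      s v w ∨ ((∃ a ∈ D, s v a) ∧ (∃ a ∈ D, s w a)) := by
    intro v w h
    induction h with
    | rel v w hvw =>
      rcases hvw with h | h | h
      · by_cases hv : v ∈ D
        · exact Or.inr ⟨⟨v, hv, s.iseqv.refl v⟩, ⟨w, h ▸ hbD v hv, s.iseqv.refl w⟩⟩
        · left
          rw [hs_r]
          exact Relation.EqvGen.rel _ _ (Or.inl ((hsame v hv).trans h))
      · left; rw [hs_r]; exact Relation.EqvGen.rel _ _ (Or.inl h)
      · left; rw [hs_r]; exact Relation.EqvGen.rel _ _ (Or.inr h)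
    | refl v => exact Or.inl (s.iseqv.refl v)
    | symm v w h ih =>
      rcases ih with h' | ⟨h1, h2⟩
      · exact Or.inl (s.iseqv.symm h')
      · exact Or.inr ⟨h2, h1⟩
    | trans v w x h1 h2 ih1 ih2 =>
      rcases ih1 with h1' | ⟨ha1, ha2⟩
      · rcases ih2 with h2' | ⟨hb1', hb2'⟩
        · exact Or.inl (s.iseqv.trans h1' h2')
        · obtain ⟨a, haD, haw⟩ := hb1'
          exact Or.inr ⟨⟨a, haD, s.iseqv.trans h1' haw⟩, hb2'⟩
      · rcases ih2 with h2' | ⟨hb1', hb2'⟩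
        · obtain ⟨a, haD, haw⟩ := ha2
          exact Or.inr ⟨ha1, ⟨a, haD, s.iseqv.trans (s.iseqv.symm h2') haw⟩⟩
        · exact Or.inr ⟨ha1, hb2'⟩
  -- the projection map
  set f : Quotient s → Quotient S1 := Quotient.map' id hss with hf
  set q : V → Quotient s := Quotient.mk s with hq
  set B : Finset (Quotient s) := D.image q with hB
  -- collisions of f are inside B
  have hkey : ∀ x y : Quotient s, f x = f y → x ≠ y → x ∈ B := by
    intro x y hfxy hne
    obtain ⟨v, rfl⟩ := Quotient.exists_rep x
    obtain ⟨w, rfl⟩ := Quotient.exists_rep y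
    have h1 : S1 v w := Quotient.exact' hfxy
    rw [hS1_r] at h1
    rcases key v w h1 with h' | ⟨⟨a, haD, hva⟩, _⟩
    · exact absurd (Quotient.sound' h') hne
    · exact Finset.mem_image.mpr ⟨a, haD, (Quotient.sound' hva).symm⟩
  -- B is nonempty
  have hBne : B.Nonempty := by
    apply Finset.Nonempty.image
    rw [← Finset.card_pos, hD]; norm_num
  -- B has at most 3 elements
  have hB3 : B.card ≤ 3 := by
    have hsum : D.card = ∑ x ∈ B, (D.filter fun a => q a = x).card := by
      rw [hB]; exact Finset.card_eq_sum_card_image q D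
    have hfib : ∀ x ∈ B, 2 ≤ (D.filter fun a => q a = x).card := by
      intro x hx
      obtain ⟨v, hvD, rfl⟩ := Finset.mem_image.mp hx
      have hb'v : q (b' v) = q v := by
        apply Quotient.sound'
        apply s.iseqv.symm
        show s v (b' v)
        rw [hs_r]
        exact Relation.EqvGen.rel _ _ (Or.inl rfl)
      have hsubset : ({v, b' v} : Finset V) ⊆ D.filter fun a => q a = q v := by
        intro u hu
        rcases Finset.mem_insert.mp hu with rfl | hu
        · exact Finset.mem_filter.mpr ⟨hvD, rfl⟩
        · rw [Finset.mem_singleton] at hu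
          subst hu
          exact Finset.mem_filter.mpr ⟨hb'D v hvD, hb'v⟩
      have hcard2 : ({v, b' v} : Finset V).card = 2 :=
        Finset.card_pair (fun h => hb'1 v h.symm)
      calc 2 = ({v, b' v} : Finset V).card := hcard2.symm
        _ ≤ _ := Finset.card_le_card hsubset
    have h2B : 2 * B.card ≤ D.card := by
      rw [hsum]
      calc 2 * B.card = B.card * 2 := by ring
        _ = ∑ _x ∈ B, 2 := by rw [Finset.sum_const, smul_eq_mul]
        _ ≤ ∑ x ∈ B, (D.filter fun a => q a = x).card := Finset.sum_le_sum hfib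
    omega
  -- Step 2: counting
  have step2 : Fintype.card (Quotient s) + 1 ≤ Fintype.card (Quotient S1) + B.card :=
    aux_count f B hBne hkey
  have hnum1 : numAltCycles b' g = Fintype.card (Quotient s) := by
    rw [numAltCycles, ← hs, Nat.card_eq_fintype_card]
  have hnum2 : numAltCycles b g = Fintype.card (Quotient t) := by
    rw [numAltCycles, ← ht, Nat.card_eq_fintype_card]
  omega
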